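/- Let X be a perfectly paracompact topological space that is not hereditarily Baire. Then there exist a topological space Y and a bijective map f : X → Y that is piecewise continuous but not scatteredly continuous. -/

import Mathlib

open Set Topology

universe u

/-- A map `f : X → Y` is *scatteredly continuous* if for every non-empty subset `A ⊆ X`
the restriction `f|A` has a point of continuity. -/
def ScatteredlyContinuous {X Y : Type*} [TopologicalSpace X] [TopologicalSpace Y]
    (f : X → Y) : Prop :=
  ∀ A : Set X, A.Nonempty → ∃ a ∈ A, ContinuousWithinAt f A a

/-- A map `f : X → Y` is *piecewise continuous* if `X` has a countable closed cover
such that the restriction of `f` to each member of the cover is continuous. -/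
def PiecewiseContinuous {X Y : Type*} [TopologicalSpace X] [TopologicalSpace Y]
    (f : X → Y) : Prop :=
  ∃ C : Set (Set X), C.Countable ∧ (∀ c ∈ C, IsClosed c) ∧ ⋃₀ C = Set.univ ∧
    ∀ c ∈ C, ContinuousOn f c

lemma aux_interior_union {α : Type*} [TopologicalSpace α] {s t : Set α} (hs : IsClosed s)
    (his : interior s = ∅) (hit : interior t = ∅) : interior (s ∪ t) = ∅ := by
  have h1 : interior (s ∪ t) \ s ⊆ interior t := by
    apply interior_maximal
    · intro x hx
      rcases interior_subset hx.1 with h | h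
      · exact absurd h hx.2
      · exact h
    · exact isOpen_interior.sdiff hs
  have h2 : interior (s ∪ t) ⊆ s := by
    intro x hx
    by_contra hxs
    have := h1 ⟨hx, hxs⟩
    rw [hit] at this
    exact this
  have h3 : interior (s ∪ t) ⊆ interior s := interior_maximal h2 isOpen_interior
  rw [his] at h3
  exact eq_empty_iff_forall_notMem.2 fun x hx => h3 hx

lemma aux_fsigma {X : Type u} [TopologicalSpace X] {s : Set X} (h : IsGδ s) :
    ∃ K : ℕ → Set X, (∀ i, IsClosed (K i)) ∧ (⋃ i, K i) = sᶜ := by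
  obtain ⟨T, hTo, hTc, rfl⟩ := h
  rcases T.eq_empty_or_nonempty with rfl | hne
  · exact ⟨fun _ => ∅, fun _ => isClosed_empty, by simp⟩
  · obtain ⟨u, rfl⟩ := hTc.exists_eq_range hne
    refine ⟨fun i => (u i)ᶜ, fun i => (hTo _ (mem_range_self i)).isClosed_compl, ?_⟩
    rw [sInter_range, ← compl_iInter]

lemma aux_cont {X : Type u} [tX : TopologicalSpace X] (S : Set (Set X)) (c : Set X)
    (hc : ∀ s ∈ S, (Subtype.val : ↥c → X) ⁻¹' s = ∅ ∨ (Subtype.val : ↥c → X) ⁻¹' s = univ) :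
    @ContinuousOn X X tX (tX ⊓ TopologicalSpace.generateFrom S) id c := by
  rw [@continuousOn_iff_continuous_restrict X X tX (tX ⊓ TopologicalSpace.generateFrom S)]
  rw [continuous_inf_rng]
  refine ⟨continuous_subtype_val, ?_⟩
  rw [continuous_generateFrom_iff]
  intro s hs
  have he : c.restrict id ⁻¹' s = (Subtype.val : ↥c → X) ⁻¹' s := rfl
  show IsOpen ((Subtype.val : ↥c → X) ⁻¹' s)
  rcases hc s hs with h | h
  · rw [h]; exact isOpen_empty
  · rw [h]; exact isOpen_univ

theorem exists_piecewiseContinuous_not_scatteredlyContinuous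
    {X : Type u} [TopologicalSpace X]
    [ParacompactSpace X]
    (hperf : ∀ C : Set X, IsClosed C → IsGδ C)
    (hnb : ¬ ∀ C : Set X, IsClosed C → BaireSpace C) :
    ∃ (Y : Type u) (_ : TopologicalSpace Y) (f : X → Y),
      Function.Bijective f ∧ PiecewiseContinuous f ∧ ¬ ScatteredlyContinuous f := by
  rename_i tX paraX
  push_neg at hnb
  obtain ⟨Cs, hCs, hCB⟩ := hnb
  -- extract failure of Baire property
  have hng : ¬ ∀ g : ℕ → Set ↥Cs, (∀ n, IsOpen (g n)) → (∀ n, Dense (g n)) →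
      Dense (⋂ n, g n) := fun h => hCB ⟨h⟩
  push_neg at hng
  obtain ⟨g, hgo, hgd, hgnd⟩ := hng
  -- the finite unions of the complements
  set N : ℕ → Set ↥Cs := fun n => ⋃ k ∈ Finset.range (n + 1), (g k)ᶜ with hN
  have hNc : ∀ n, IsClosed (N n) := fun n =>
    isClosed_biUnion_finset fun k _ => (hgo k).isClosed_compl
  have hgint : ∀ k, interior (g k)ᶜ = ∅ := by
    intro k
    rw [interior_compl, (hgd k).closure_eq, compl_univ]
  have hNint : ∀ n, interior (N n) = ∅ := by
    intro n
    induction n with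
    | zero => simpa [hN] using hgint 0
    | succ m ih =>
      have : N (m + 1) = N m ∪ (g (m + 1))ᶜ := by
        simp only [hN, Finset.range_add_one, Finset.set_biUnion_insert]
        rw [union_comm]
      rw [this]
      exact aux_interior_union (hNc m) ih (hgint (m + 1))
  have hNmono : Monotone N := by
    intro a b hab
    exact Set.biUnion_subset_biUnion_left (Finset.range_subset_range.2 (by omega))
  -- a nonempty open set missing the intersection
  have hx : ∃ x : ↥Cs, x ∉ closure (⋂ n, g n) := by
    by_contra h
    push_neg at h
    exact hgnd fun x => h x
  obtain ⟨x₀, hx₀⟩ := hx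
  set W : Set ↥Cs := (closure (⋂ n, g n))ᶜ with hW
  have hWo : IsOpen W := isClosed_closure.isOpen_compl
  have hWsub : W ⊆ ⋃ n, (g n)ᶜ := by
    intro z hz
    rw [← compl_iInter]
    exact fun hm => hz (subset_closure hm)
  obtain ⟨Ov, hOv, hOvW⟩ := isOpen_induced_iff.1 hWo
  set V : Set X := Subtype.val '' W with hV
  have hVC : V ⊆ Cs := by rintro v ⟨w, _, rfl⟩; exact w.2
  have hVne : V.Nonempty := ⟨x₀, x₀, hx₀, rfl⟩
  have hVeq : V = Cs ∩ Ov := by rw [hV, ← hOvW, Subtype.image_preimage_coe]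
  set Z : Set X := closure V with hZ
  have hZC : Z ⊆ Cs := closure_minimal hVC hCs
  have hZne : Z.Nonempty := hVne.mono subset_closure
  have hZcl : IsClosed Z := isClosed_closure
  have hVZ : V ⊆ Z := subset_closure
  -- closed embedding of Cs
  have hemb : IsClosedMap (Subtype.val : ↥Cs → X) :=
    hCs.isClosedEmbedding_subtypeVal.isClosedMap
  set Zq : ℕ → Set X := fun n => (Subtype.val '' N n ∩ Z) ∪ (Z \ V) with hZq
  have hZqZ : ∀ n, Zq n ⊆ Z := fun n => union_subset inter_subset_right diff_subset
  have hZVcl : IsClosed (Z \ V) := by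
    have : Z \ V = Z ∩ Ovᶜ := by
      ext z
      simp only [mem_diff, mem_inter_iff, mem_compl_iff, hVeq, mem_inter_iff]
      exact ⟨fun ⟨h1, h2⟩ => ⟨h1, fun ho => h2 ⟨hZC h1, ho⟩⟩, fun ⟨h1, h2⟩ => ⟨h1, fun ⟨_, ho⟩ => h2 ho⟩⟩
    rw [this]
    exact hZcl.inter hOv.isClosed_compl
  have hZqcl : ∀ n, IsClosed (Zq n) :=
    fun n => (((hemb _ (hNc n)).inter hZcl).union hZVcl)
  have hZqmono : Monotone Zq := by
    intro a b hab
    exact union_subset_union_left _ (inter_subset_inter_left _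
      (image_mono (hNmono hab)))
  have hZunion : (⋃ n, Zq n) = Z := by
    apply Subset.antisymm (iUnion_subset hZqZ)
    intro z hz
    by_cases hzV : z ∈ V
    · obtain ⟨w, hwW, rfl⟩ := hzV
      obtain ⟨n, hn⟩ := mem_iUnion.1 (hWsub hwW)
      exact mem_iUnion.2 ⟨n, Or.inl ⟨⟨w, mem_biUnion (Finset.self_mem_range_succ n) hn, rfl⟩, hz⟩⟩
    · exact mem_iUnion.2 ⟨0, Or.inr ⟨hz, hzV⟩⟩
  -- nowhere density of Zq n relative to Z
  have hnwd : ∀ n (O : Set X), IsOpen O → O ∩ Z ⊆ Zq n → O ∩ Z = ∅ := by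
    intro n O hO hsub
    by_contra hne
    obtain ⟨x, hxO, hxZ⟩ := nonempty_iff_ne_empty.2 hne
    obtain ⟨y, hyO, hyV⟩ := _root_.mem_closure_iff.1 hxZ O hO hxO
    have hyC : y ∈ Cs := hVC hyV
    set s : Set ↥Cs := Subtype.val ⁻¹' (O ∩ Ov) with hs
    have hso : IsOpen s := (hO.inter hOv).preimage continuous_subtype_val
    have hys : (⟨y, hyC⟩ : ↥Cs) ∈ s := ⟨hyO, (hVeq ▸ hyV).2⟩
    have hssub : s ⊆ N n := by
      rintro z ⟨hzO, hzOv⟩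
      have hzV : (z : X) ∈ V := hVeq ▸ ⟨z.2, hzOv⟩
      have hzZq : (z : X) ∈ Zq n := hsub ⟨hzO, hVZ hzV⟩
      rcases hzZq with h | h
      · obtain ⟨w, hwN, hwz⟩ := h.1
        rwa [← Subtype.val_injective hwz]
      · exact absurd hzV h.2
    have : (⟨y, hyC⟩ : ↥Cs) ∈ interior (N n) := interior_maximal hssub hso hys
    rw [hNint n] at this
    exact this
  -- layers
  set L : ℕ → Set X := disjointed Zq with hL
  have hLsub : ∀ n, L n ⊆ Zq n := fun n => disjointed_subset Zq n
  have hLunion : (⋃ n, L n) = Z := by rw [hL, iUnion_disjointed, hZunion]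
  have hLdisj : Pairwise (Function.onFun Disjoint L) := disjoint_disjointed Zq
  set prevZ : ℕ → Set X := fun n => Nat.rec ∅ (fun k _ => Zq k) n with hprevZ
  have hprevcl : ∀ n, IsClosed (prevZ n) := by
    intro n
    cases n with
    | zero => exact isClosed_empty
    | succ k => exact hZqcl k
  have hLrel : ∀ n, L n = Zq n \ prevZ n := by
    intro n
    cases n with
    | zero => simp only [hL, hprevZ]; rw [disjointed_zero]; simp
    | succ k => exact hZqmono.disjointed_succ (not_isMax k)
  obtain ⟨KZ, hKZcl, hKZu⟩ := aux_fsigma (hperf Z hZcl)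
  have hKn : ∀ n, ∃ K : ℕ → Set X, (∀ i, IsClosed (K i)) ∧ (⋃ i, K i) = (prevZ n)ᶜ :=
    fun n => aux_fsigma (hperf _ (hprevcl n))
  choose Kn hKncl hKnu using hKn
  set P : ℕ ⊕ ℕ × ℕ → Set X := Sum.elim KZ (fun p => Zq p.1 ∩ Kn p.1 p.2) with hP
  -- preimage dichotomy for the pieces
  have hdich : ∀ c : Set X, (∀ k, c ∩ L k = ∅ ∨ c ⊆ L k) →
      ∀ s ∈ {s | ∃ n, s = L n}, (Subtype.val : ↥c → X) ⁻¹' s = ∅ ∨ (Subtype.val : ↥c → X) ⁻¹' s = univ := by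
    rintro c hc s ⟨k, rfl⟩
    rcases hc k with h | h
    · left
      ext x
      simp only [mem_preimage, mem_empty_iff_false, iff_false]
      exact fun hx => (eq_empty_iff_forall_notMem.1 h x ⟨x.2, hx⟩)
    · right
      exact eq_univ_of_forall fun x => h x.2
  have hPcl : ∀ i, IsClosed (P i) := by
    intro i
    cases i with
    | inl i => exact hKZcl i
    | inr p => exact (hZqcl p.1).inter (hKncl p.1 p.2)
  set S : Set (Set X) := {s | ∃ n, s = L n} with hS
  set tY : TopologicalSpace X := tX ⊓ TopologicalSpace.generateFrom S with htY
  have hLopen : ∀ n, IsOpen[tY] (L n) := by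
    intro n
    have h1 : IsOpen[TopologicalSpace.generateFrom S] (L n) :=
      TopologicalSpace.isOpen_generateFrom_of_mem ⟨n, rfl⟩
    exact h1.mono inf_le_right
  refine ⟨X, tY, id, Function.bijective_id, ?_, ?_⟩
  · -- piecewise continuity
    have key : ∀ c : Set X, (∀ k, c ∩ L k = ∅ ∨ c ⊆ L k) → @ContinuousOn X X tX tY id c :=
      fun c hc => @aux_cont X tX S c (hdich c hc)
    refine ⟨range P, countable_range P, ?_, ?_, ?_⟩
    · rintro c ⟨i, rfl⟩
      exact hPcl i
    · rw [sUnion_range]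
      apply eq_univ_of_forall
      intro x
      by_cases hxZ : x ∈ Z
      · have hx1 : x ∈ ⋃ n, L n := hLunion ▸ hxZ
        obtain ⟨n, hn⟩ := mem_iUnion.1 hx1
        rw [hLrel n] at hn
        have hx2 : x ∈ (prevZ n)ᶜ := hn.2
        rw [← hKnu n] at hx2
        obtain ⟨m, hm⟩ := mem_iUnion.1 hx2
        exact mem_iUnion.2 ⟨Sum.inr (n, m), hn.1, hm⟩
      · have hx1 : x ∈ ⋃ i, KZ i := by rw [hKZu]; exact hxZ
        obtain ⟨i, hi⟩ := mem_iUnion.1 hx1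
        exact mem_iUnion.2 ⟨Sum.inl i, hi⟩
    · rintro c ⟨i, rfl⟩
      cases i with
      | inl i =>
        apply key
        intro k
        left
        apply eq_empty_iff_forall_notMem.2
        rintro x ⟨hx1, hx2⟩
        have hxZc : x ∈ Zᶜ := by
          rw [← hKZu]
          exact mem_iUnion.2 ⟨i, hx1⟩
        exact hxZc (hZqZ k (hLsub k hx2))
      | inr p =>
        apply key
        intro k
        rcases eq_or_ne k p.1 with heq | hk
        · right
          rintro x ⟨hx1, hx2⟩
          rw [heq, hLrel p.1]
          refine ⟨hx1, ?_⟩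
          have hxp : x ∈ (prevZ p.1)ᶜ := by
            rw [← hKnu p.1]
            exact mem_iUnion.2 ⟨p.2, hx2⟩
          exact hxp
        · left
          apply eq_empty_iff_forall_notMem.2
          rintro x ⟨hx1, hx2⟩
          have hxL : x ∈ L p.1 := by
            rw [hLrel p.1]
            refine ⟨hx1.1, ?_⟩
            have : x ∈ (prevZ p.1)ᶜ := by
              rw [← hKnu p.1]
              exact mem_iUnion.2 ⟨p.2, hx1.2⟩
            exact this
          exact (Set.disjoint_iff_inter_eq_empty.1 (hLdisj hk.symm) ▸
            (⟨hxL, hx2⟩ : x ∈ L p.1 ∩ L k) : x ∈ (∅ : Set X))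
  · -- not scatteredly continuous
    intro hsc
    obtain ⟨a, haZ, hcont⟩ := hsc Z hZne
    have haL : a ∈ ⋃ n, L n := hLunion ▸ haZ
    obtain ⟨n, hn⟩ := mem_iUnion.1 haL
    have hmemY : L n ∈ @nhds X tY a := by
      exact (hLopen n).mem_nhds hn
    have hmem : id ⁻¹' (L n) ∈ @nhdsWithin X tX a Z := hcont hmemY
    rw [@mem_nhdsWithin X tX] at hmem
    obtain ⟨O, hO, haO, hsub⟩ := hmem
    have hOZ : O ∩ Z = ∅ := hnwd n O hO (fun x hx => hLsub n (hsub hx))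
    exact absurd hOZ (nonempty_iff_ne_empty.1 ⟨a, haO, haZ⟩)
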